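/- Let k₁, k₂ ≥ 0 with k₂² < 2k₁, set μ₁ = √(√(2k₁) + k₂) and μ₂ = √(√(2k₁) − k₂), and define s₀(t) = μ₂²·sinh²(μ₁t/√2) − μ₁²·sin²(μ₂t/√2), s₁(t) = 2√k₁·μ₁μ₂(μ₁·sin(μ₂t/√2)·cos(μ₂t/√2) + μ₂·cosh(μ₁t/√2)·sinh(μ₁t/√2)), s₂(t) = √(2k₁)·(μ₁²·sin²(μ₂t/√2) + μ₂²·sinh²(μ₁t/√2)). Let K = [[k₁ I, 0],[0, k₂ I]]. Then S(t) = ½·[[−(s₁(t)/s₀(t)) I, (s₂(t)/s₀(t)) I],[(s₂(t)/s₀(t)) I, −(s₀'(t)/s₀(t)) I]] solves the matrix Riccati equation S'(t) = S(t)C + Cᵀ S(t) + S(t) D S(t) − K on every interval of (0,∞) where s₀ does not vanish, and S(t)⁻¹ → 0 as t → 0⁺. -/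

import Mathlib

set_option linter.unusedSectionVars false
set_option maxHeartbeats 1000000


noncomputable section
open Real Set Matrix Filter

/-- The `2n × 2n` matrix `C = [[0, −I], [0, 0]]` in `n × n` block form. -/
def Cmat (n : ℕ) : Matrix (Fin n ⊕ Fin n) (Fin n ⊕ Fin n) ℝ :=
  Matrix.fromBlocks 0 (-1) 0 0

/-- The `2n × 2n` matrix `D = [[0, 0], [0, 2I]]` in `n × n` block form. -/
def Dmat (n : ℕ) : Matrix (Fin n ⊕ Fin n) (Fin n ⊕ Fin n) ℝ :=
  Matrix.fromBlocks 0 0 0 ((2 : ℝ) • 1)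

/-- The block-diagonal matrix `[[a·I, 0], [0, b·I]]`. -/
def blockDiag (n : ℕ) (a b : ℝ) : Matrix (Fin n ⊕ Fin n) (Fin n ⊕ Fin n) ℝ :=
  Matrix.fromBlocks (a • 1) 0 0 (b • 1)

/-- The matrix `½·[[-(s₁/s₀)I, (s₂/s₀)I], [(s₂/s₀)I, -(s₀'/s₀)I]]`. -/
def harnackMatrix (n : ℕ) (s₀ s₁ s₂ : ℝ → ℝ) (t : ℝ) :
    Matrix (Fin n ⊕ Fin n) (Fin n ⊕ Fin n) ℝ :=
  (1/2 : ℝ) • Matrix.fromBlocks (-(s₁ t / s₀ t) • 1) ((s₂ t / s₀ t) • 1)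
    ((s₂ t / s₀ t) • 1) (-(deriv s₀ t / s₀ t) • 1)

/-- `μ₁ = √(√(2k₁) + k₂)`. -/
def mu1 (k₁ k₂ : ℝ) : ℝ := Real.sqrt (Real.sqrt (2 * k₁) + k₂)

/-- `μ₂ = √(√(2k₁) − k₂)`. -/
def mu2 (k₁ k₂ : ℝ) : ℝ := Real.sqrt (Real.sqrt (2 * k₁) - k₂)

/-- `s₀` in the case `k₂² < 2k₁`. -/
def s0C (k₁ k₂ t : ℝ) : ℝ :=
  (mu2 k₁ k₂) ^ 2 * Real.sinh (mu1 k₁ k₂ / Real.sqrt 2 * t) ^ 2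
    - (mu1 k₁ k₂) ^ 2 * Real.sin (mu2 k₁ k₂ / Real.sqrt 2 * t) ^ 2

/-- `s₁` in the case `k₂² < 2k₁`. -/
def s1C (k₁ k₂ t : ℝ) : ℝ :=
  2 * Real.sqrt k₁ * mu1 k₁ k₂ * mu2 k₁ k₂ *
    (mu1 k₁ k₂ * Real.sin (mu2 k₁ k₂ / Real.sqrt 2 * t) * Real.cos (mu2 k₁ k₂ / Real.sqrt 2 * t)
      + mu2 k₁ k₂ * Real.cosh (mu1 k₁ k₂ / Real.sqrt 2 * t) *
          Real.sinh (mu1 k₁ k₂ / Real.sqrt 2 * t))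

/-- `s₂` in the case `k₂² < 2k₁`. -/
def s2C (k₁ k₂ t : ℝ) : ℝ :=
  Real.sqrt (2 * k₁) *
    ((mu1 k₁ k₂) ^ 2 * Real.sin (mu2 k₁ k₂ / Real.sqrt 2 * t) ^ 2
      + (mu2 k₁ k₂) ^ 2 * Real.sinh (mu1 k₁ k₂ / Real.sqrt 2 * t) ^ 2)


/-- Derivative of `s0C`. -/
def d0C (k₁ k₂ t : ℝ) : ℝ :=
  (mu2 k₁ k₂) ^ 2 * (2 * Real.sinh (mu1 k₁ k₂ / Real.sqrt 2 * t) *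
      (Real.cosh (mu1 k₁ k₂ / Real.sqrt 2 * t) * (mu1 k₁ k₂ / Real.sqrt 2)))
    - (mu1 k₁ k₂) ^ 2 * (2 * Real.sin (mu2 k₁ k₂ / Real.sqrt 2 * t) *
      (Real.cos (mu2 k₁ k₂ / Real.sqrt 2 * t) * (mu2 k₁ k₂ / Real.sqrt 2)))

/-- Derivative of `s1C`. -/
def d1C (k₁ k₂ t : ℝ) : ℝ :=
  2 * Real.sqrt k₁ * mu1 k₁ k₂ * mu2 k₁ k₂ *
    (mu1 k₁ k₂ * (Real.cos (mu2 k₁ k₂ / Real.sqrt 2 * t) ^ 2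
        - Real.sin (mu2 k₁ k₂ / Real.sqrt 2 * t) ^ 2) * (mu2 k₁ k₂ / Real.sqrt 2)
      + mu2 k₁ k₂ * (Real.cosh (mu1 k₁ k₂ / Real.sqrt 2 * t) ^ 2
        + Real.sinh (mu1 k₁ k₂ / Real.sqrt 2 * t) ^ 2) * (mu1 k₁ k₂ / Real.sqrt 2))

/-- Derivative of `s2C`. -/
def d2C (k₁ k₂ t : ℝ) : ℝ :=
  Real.sqrt (2 * k₁) *
    ((mu1 k₁ k₂) ^ 2 * (2 * Real.sin (mu2 k₁ k₂ / Real.sqrt 2 * t) *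
        (Real.cos (mu2 k₁ k₂ / Real.sqrt 2 * t) * (mu2 k₁ k₂ / Real.sqrt 2)))
      + (mu2 k₁ k₂) ^ 2 * (2 * Real.sinh (mu1 k₁ k₂ / Real.sqrt 2 * t) *
        (Real.cosh (mu1 k₁ k₂ / Real.sqrt 2 * t) * (mu1 k₁ k₂ / Real.sqrt 2))))

/-- Second derivative of `s0C`. -/
def dd0C (k₁ k₂ t : ℝ) : ℝ :=
  (mu2 k₁ k₂) ^ 2 * (2 * (Real.cosh (mu1 k₁ k₂ / Real.sqrt 2 * t) ^ 2
      + Real.sinh (mu1 k₁ k₂ / Real.sqrt 2 * t) ^ 2) * (mu1 k₁ k₂ / Real.sqrt 2) ^ 2)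
    - (mu1 k₁ k₂) ^ 2 * (2 * (Real.cos (mu2 k₁ k₂ / Real.sqrt 2 * t) ^ 2
      - Real.sin (mu2 k₁ k₂ / Real.sqrt 2 * t) ^ 2) * (mu2 k₁ k₂ / Real.sqrt 2) ^ 2)

/-- The auxiliary positive function `w`. -/
def wC (k₁ k₂ t : ℝ) : ℝ :=
  (2 * k₁ - k₂ ^ 2) * (2 + Real.sinh (mu1 k₁ k₂ / Real.sqrt 2 * t) ^ 2
      - Real.sin (mu2 k₁ k₂ / Real.sqrt 2 * t) ^ 2)
    + k₂ * ((mu1 k₁ k₂) ^ 2 * Real.sin (mu2 k₁ k₂ / Real.sqrt 2 * t) ^ 2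
      + (mu2 k₁ k₂) ^ 2 * Real.sinh (mu1 k₁ k₂ / Real.sqrt 2 * t) ^ 2)

/-- Explicit inverse of the harnack matrix. -/
def Tmat (n : ℕ) (k₁ k₂ t : ℝ) : Matrix (Fin n ⊕ Fin n) (Fin n ⊕ Fin n) ℝ :=
  (-2 / (Real.sqrt (2 * k₁) * wC k₁ k₂ t)) •
    Matrix.fromBlocks (d0C k₁ k₂ t • 1) (s2C k₁ k₂ t • 1) (s2C k₁ k₂ t • 1) (s1C k₁ k₂ t • 1)

lemma absA (a b al be q s r k1 k2 A B C D : ℝ)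
    (hC : C ^ 2 = A ^ 2 + 1) (hD : D ^ 2 = 1 - B ^ 2)
    (ha2 : a ^ 2 = s + k2) (hb2 : b ^ 2 = s - k2)
    (ha : a = q * al) (hb : b = q * be)
    (hal : 2 * al ^ 2 = s + k2) (hbe : 2 * be ^ 2 = s - k2)
    (hs : s ^ 2 = 2 * k1) (hqr : s = q * r) (hq : q ^ 2 = 2) (hr : r ^ 2 = k1) :
    (s * (a ^ 2 * (2 * B * (D * be)) + b ^ 2 * (2 * A * (C * al)))) = (2 * r * a * b * (a * B * D + b * C * A)) := by
  linear_combination ((2 : ℝ) * be * s * B * D + (-2 : ℝ) * b * r * B * D) * ha2 + ((2 : ℝ) * al * s * A * C + (-2 : ℝ) * a * r * A * C) * hb2 + ((2 : ℝ) * r * k2 * A * C + (-2 : ℝ) * s * r * A * C) * ha + ((-2 : ℝ) * r * k2 * B * D + (-2 : ℝ) * s * r * B * D) * hb + ((2 : ℝ) * be * B * D + (2 : ℝ) * al * A * C) * hs + ((2 : ℝ) * be * k2 * B * D + (-2 : ℝ) * be * q * r * B * D + (-2 : ℝ) * al * k2 * A * C + (-2 : ℝ) * al * q * r * A * C) * hqr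 + ((-2 : ℝ) * be * r^2 * B * D + (-2 : ℝ) * al * r^2 * A * C) * hq + ((-4 : ℝ) * be * B * D + (-4 : ℝ) * al * A * C) * hr

lemma absI1 (a b al be q s r k1 k2 A B C D : ℝ)
    (hC : C ^ 2 = A ^ 2 + 1) (hD : D ^ 2 = 1 - B ^ 2)
    (ha2 : a ^ 2 = s + k2) (hb2 : b ^ 2 = s - k2)
    (ha : a = q * al) (hb : b = q * be)
    (hal : 2 * al ^ 2 = s + k2) (hbe : 2 * be ^ 2 = s - k2)
    (hs : s ^ 2 = 2 * k1) (hqr : s = q * r) (hq : q ^ 2 = 2) (hr : r ^ 2 = k1) :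
    (2 * r * a * b * (a * B * D + b * C * A)) * (b ^ 2 * (2 * A * (C * al)) - a ^ 2 * (2 * B * (D * be))) - (2 * r * a * b * (a * (D ^ 2 - B ^ 2) * be + b * (C ^ 2 + A ^ 2) * al)) * (b ^ 2 * A ^ 2 - a ^ 2 * B ^ 2) = (s * (a ^ 2 * B ^ 2 + b ^ 2 * A ^ 2)) ^ 2 - 2 * k1 * (b ^ 2 * A ^ 2 - a ^ 2 * B ^ 2) ^ 2 := by
  linear_combination ((2 : ℝ) * a * b^4 * al * r * A^2 + (2 : ℝ) * a^3 * b^2 * al * r * B^2) * hC + ((-2 : ℝ) * a^2 * b^3 * be * r * A^2 + (-2 : ℝ) * a^4 * b * be * r * B^2) * hD + ((2 : ℝ) * k1 * k2 * B^4 + (2 : ℝ) * s * k1 * B^4 + (-1 : ℝ) * s^2 * k2 * B^4 + (-1 : ℝ) * s^3 * B^4 + (-2 : ℝ) * b * be * r * k2 * B^2 + (-2 : ℝ) * b * be * s * r * B^2 + (-4 : ℝ) * b^2 * k1 * A^2 * B^2 + (-2 : ℝ) * b^2 * s^2 * A^2 * B^2 + (-2 : ℝ) * b^3 * be * r * A^2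 + (4 : ℝ) * b^3 * be * r * A^2 * B^2 + (4 : ℝ) * b^3 * al * r * A * B * C * D + (-4 : ℝ) * a * b^2 * be * r * A * B * C * D + (2 : ℝ) * a * b^2 * al * r * B^2 + (4 : ℝ) * a * b^2 * al * r * A^2 * B^2 + (2 : ℝ) * a^2 * k1 * B^4 + (-1 : ℝ) * a^2 * s^2 * B^4 + (-2 : ℝ) * a^2 * b * be * r * B^2) * ha2 + ((-4 : ℝ) * k1 * k2 * A^2 * B^2 + (-2 : ℝ) * k1 * k2 * A^4 + (-4 : ℝ) * s * k1 * A^2 * B^2 + (2 : ℝ) * s * k1 * A^4 + (-2 : ℝ) * s^2 * k2 * A^2 * B^2 + s^2 * k2 * A^4 + (-2 : ℝ) * s^3 * A^2 * B^2 + (-1 : ℝ) * s^3 * A^4 + (-2 : ℝ) * b * be * r * k2 * A^2 + (4 : ℝ) * b * be * r * k2 * A^2 * B^2 + (-2 : ℝ) * b * be * s * r * A^2 + (4 : ℝ) * b * be * s * r * A^2 * B^2 + (4 : ℝ) * b * al * r * k2 * A * B * C * D + (4 : ℝ) * b * al * s * r * A * B * C * D + (2 : ℝ) * b^2 * k1 *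 A^4 + (-1 : ℝ) * b^2 * s^2 * A^4 + (-4 : ℝ) * a * be * r * k2 * A * B * C * D + (-4 : ℝ) * a * be * s * r * A * B * C * D + (2 : ℝ) * a * al * r * k2 * B^2 + (-2 : ℝ) * a * al * r * k2 * A^2 + (4 : ℝ) * a * al * r * k2 * A^2 * B^2 + (2 : ℝ) * a * al * s * r * B^2 + (2 : ℝ) * a * al * s * r * A^2 + (4 : ℝ) * a * al * s * r * A^2 * B^2 + (2 : ℝ) * a * b^2 * al * r * A^2) * hb2 + ((4 : ℝ) * be * r * k2^2 * A * B * C * D + (-4 : ℝ) * be * s^2 * r * A * B * C * D + (-2 : ℝ) * al * r * k2^2 * B^2 + (2 : ℝ) * al * r * k2^2 * A^2 + (-4 : ℝ) * al * r * k2^2 * A^2 * B^2 + (-4 : ℝ) * al * s * r * k2 * A^2 + (2 : ℝ) * al * s^2 * r * B^2 + (2 : ℝ) * al * s^2 * r * A^2 + (4 : ℝ) * al * s^2 * r * A^2 * B^2) * ha + ((-2 : ℝ) * be * r * k2^2 * B^2 + (2 : ℝ) * be * r * k2^2 * A^2 + (-4 : ℝ) * be * r * k2^2 * A^2 * B^2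 + (-4 : ℝ) * be * s * r * k2 * B^2 + (-2 : ℝ) * be * s^2 * r * B^2 + (-2 : ℝ) * be * s^2 * r * A^2 + (4 : ℝ) * be * s^2 * r * A^2 * B^2 + (-4 : ℝ) * al * r * k2^2 * A * B * C * D + (4 : ℝ) * al * s^2 * r * A * B * C * D) * hb + ((-1 : ℝ) * q * r * k2^2 * B^2 + q * r * k2^2 * A^2 + (-2 : ℝ) * q * r * k2^2 * A^2 * B^2 + (-2 : ℝ) * q * s * r * k2 * A^2 + q * s^2 * r * B^2 + q * s^2 * r * A^2 + (2 : ℝ) * q * s^2 * r * A^2 * B^2) * hal + ((-1 : ℝ) * q * r * k2^2 * B^2 + q * r * k2^2 * A^2 + (-2 : ℝ) * q * r * k2^2 * A^2 * B^2 + (-2 : ℝ) * q * s * r * k2 * B^2 + (-1 : ℝ) * q * s^2 * r * B^2 + (-1 : ℝ) * q * s^2 * r * A^2 + (2 : ℝ) * q * s^2 * r * A^2 * B^2) * hbe + ((-1 : ℝ) * k2^2 * B^4 + (2 : ℝ) * k2^2 * A^2 * B^2 + (-1 : ℝ) * k2^2 * A^4 + (-8 : ℝ) * k1 * A^2 * B^2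 + (-2 : ℝ) * s * k2 * B^4 + (2 : ℝ) * s * k2 * A^4 + (-1 : ℝ) * s^2 * B^4 + (-2 : ℝ) * s^2 * A^2 * B^2 + (-1 : ℝ) * s^2 * A^4 + (4 : ℝ) * q * s * r * A^2 * B^2) * hs + ((-4 : ℝ) * q * r * k2^2 * A^2 * B^2 + (8 : ℝ) * q * r * k1 * A^2 * B^2) * hqr + ((-4 : ℝ) * r^2 * k2^2 * A^2 * B^2 + (8 : ℝ) * r^2 * k1 * A^2 * B^2) * hq + ((-8 : ℝ) * k2^2 * A^2 * B^2 + (16 : ℝ) * k1 * A^2 * B^2) * hr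

lemma absI3 (a b al be q s r k1 k2 A B C D : ℝ)
    (hC : C ^ 2 = A ^ 2 + 1) (hD : D ^ 2 = 1 - B ^ 2)
    (ha2 : a ^ 2 = s + k2) (hb2 : b ^ 2 = s - k2)
    (ha : a = q * al) (hb : b = q * be)
    (hal : 2 * al ^ 2 = s + k2) (hbe : 2 * be ^ 2 = s - k2)
    (hs : s ^ 2 = 2 * k1) (hqr : s = q * r) (hq : q ^ 2 = 2) (hr : r ^ 2 = k1) :
    (b ^ 2 * (2 * (C ^ 2 + A ^ 2) * al ^ 2) - a ^ 2 * (2 * (D ^ 2 - B ^ 2) * be ^ 2)) = 2 * (s * (a ^ 2 * B ^ 2 + b ^ 2 * A ^ 2)) + 2 * k2 * (b ^ 2 * A ^ 2 - a ^ 2 * B ^ 2) := by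
  linear_combination ((2 : ℝ) * b^2 * al^2) * hC + ((-2 : ℝ) * a^2 * be^2) * hD + ((2 : ℝ) * k2 * B^2 + (-2 : ℝ) * s * B^2 + (-2 : ℝ) * be^2 + (4 : ℝ) * be^2 * B^2) * ha2 + ((-2 : ℝ) * k2 * A^2 + (-2 : ℝ) * s * A^2 + (2 : ℝ) * al^2 + (4 : ℝ) * al^2 * A^2) * hb2 + ((-1 : ℝ) * k2 + (-2 : ℝ) * k2 * A^2 + s + (2 : ℝ) * s * A^2) * hal + ((-1 : ℝ) * k2 + (2 : ℝ) * k2 * B^2 + (-1 : ℝ) * s + (2 : ℝ) * s * B^2) * hbe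

lemma absI2 (a b al be q s r k1 k2 A B C D : ℝ)
    (hC : C ^ 2 = A ^ 2 + 1) (hD : D ^ 2 = 1 - B ^ 2)
    (ha2 : a ^ 2 = s + k2) (hb2 : b ^ 2 = s - k2)
    (ha : a = q * al) (hb : b = q * be)
    (hal : 2 * al ^ 2 = s + k2) (hbe : 2 * be ^ 2 = s - k2)
    (hs : s ^ 2 = 2 * k1) (hqr : s = q * r) (hq : q ^ 2 = 2) (hr : r ^ 2 = k1) :
    (2 * r * a * b * (a * B * D + b * C * A)) * (b ^ 2 * (2 * A * (C * al)) - a ^ 2 * (2 * B * (D * be))) - (s * (a ^ 2 * B ^ 2 + b ^ 2 * A ^ 2)) ^ 2 = s * ((b ^ 2 * A ^ 2 - a ^ 2 * B ^ 2) * ((2 * k1 - k2 ^ 2) * (2 + A ^ 2 - B ^ 2) + k2 * (a ^ 2 * B ^ 2 + b ^ 2 * A ^ 2))) := by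
  linear_combination ((4 : ℝ) * a * b^4 * al * r * A^2) * hC + ((-4 : ℝ) * a^4 * b * be * r * B^2) * hD + ((-2 : ℝ) * s * k2^2 * B^2 + (2 : ℝ) * s * k2^2 * B^4 + (-1 : ℝ) * s * k2^2 * A^2 * B^2 + (4 : ℝ) * s * k1 * B^2 + (-2 : ℝ) * s * k1 * B^4 + (2 : ℝ) * s * k1 * A^2 * B^2 + (-1 : ℝ) * s^3 * B^4 + (-4 : ℝ) * b * be * r * k2 * B^2 + (4 : ℝ) * b * be * r * k2 * B^4 + (-4 : ℝ) * b * be * s * r * B^2 + (4 : ℝ) * b * be * s * r * B^4 + (-2 : ℝ) * b^2 * s^2 * A^2 * B^2 + (4 : ℝ) * b^3 * al * r * A * B * C * D + (-4 : ℝ) * a * b^2 * be * r * A * B * C * D + a^2 * s * k2 * B^4 + (-1 : ℝ) * a^2 * s^2 * B^4 + (-4 : ℝ) * a^2 * b * be * r * B^2 + (4 : ℝ) * a^2 * b * be * r * B^4) * ha2 + ((2 : ℝ) * s * k2^2 * A^2 + (-1 : ℝ) * s * k2^2 * A^2 * B^2 + (2 : ℝ) * s * k2^2 * A^4 + (-4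 : ℝ) * s * k1 * A^2 + (2 : ℝ) * s * k1 * A^2 * B^2 + (-2 : ℝ) * s * k1 * A^4 + (-2 : ℝ) * s^2 * k2 * A^2 * B^2 + (-2 : ℝ) * s^3 * A^2 * B^2 + (-1 : ℝ) * s^3 * A^4 + (4 : ℝ) * b * al * r * k2 * A * B * C * D + (4 : ℝ) * b * al * s * r * A * B * C * D + (-1 : ℝ) * b^2 * s * k2 * A^4 + (-1 : ℝ) * b^2 * s^2 * A^4 + (-4 : ℝ) * a * be * r * k2 * A * B * C * D + (-4 : ℝ) * a * be * s * r * A * B * C * D + (-4 : ℝ) * a * al * r * k2 * A^2 + (-4 : ℝ) * a * al * r * k2 * A^4 + (4 : ℝ) * a * al * s * r * A^2 + (4 : ℝ) * a * al * s * r * A^4 + (4 : ℝ) * a * b^2 * al * r * A^2 + (4 : ℝ) * a * b^2 * al * r * A^4) * hb2 + ((4 : ℝ) * be * r * k2^2 * A * B * C * D + (-4 : ℝ) * be * s^2 * r * A * B * C * D + (4 : ℝ) * al * r * k2^2 * A^2 + (4 : ℝ) * al * r * k2^2 * A^4 + (-8 : ℝ) * al * s * r * k2 * A^2 + (-8 :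 ℝ) * al * s * r * k2 * A^4 + (4 : ℝ) * al * s^2 * r * A^2 + (4 : ℝ) * al * s^2 * r * A^4) * ha + ((-4 : ℝ) * be * r * k2^2 * B^2 + (4 : ℝ) * be * r * k2^2 * B^4 + (-8 : ℝ) * be * s * r * k2 * B^2 + (8 : ℝ) * be * s * r * k2 * B^4 + (-4 : ℝ) * be * s^2 * r * B^2 + (4 : ℝ) * be * s^2 * r * B^4 + (-4 : ℝ) * al * r * k2^2 * A * B * C * D + (4 : ℝ) * al * s^2 * r * A * B * C * D) * hb + ((2 : ℝ) * q * r * k2^2 * A^2 + (2 : ℝ) * q * r * k2^2 * A^4 + (-4 : ℝ) * q * s * r * k2 * A^2 + (-4 : ℝ) * q * s * r * k2 * A^4 + (2 : ℝ) * q * s^2 * r * A^2 + (2 : ℝ) * q * s^2 * r * A^4) * hal + ((-2 : ℝ) * q * r * k2^2 * B^2 + (2 : ℝ) * q * r * k2^2 * B^4 + (-4 : ℝ) * q * s * r * k2 * B^2 + (4 : ℝ) * q * s * r * k2 * B^4 + (-2 : ℝ) * q * s^2 * r * B^2 + (2 : ℝ) * q * s^2 * r * B^4) * hbe + ((-2 :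 ℝ) * k2^2 * B^2 + (2 : ℝ) * k2^2 * B^4 + (2 : ℝ) * k2^2 * A^2 + (2 : ℝ) * k2^2 * A^4 + (4 : ℝ) * k1 * B^2 + (-4 : ℝ) * k1 * B^4 + (-4 : ℝ) * k1 * A^2 + (-4 : ℝ) * k1 * A^4 + (-1 : ℝ) * s * k2 * B^4 + s * k2 * A^4 + (-1 : ℝ) * s^2 * B^4 + (-2 : ℝ) * s^2 * A^2 * B^2 + (-1 : ℝ) * s^2 * A^4 + (-2 : ℝ) * q * r * k2 * B^2 + (2 : ℝ) * q * r * k2 * B^4 + (-2 : ℝ) * q * r * k2 * A^2 + (-2 : ℝ) * q * r * k2 * A^4 + (-2 : ℝ) * q * s * r * B^2 + (2 : ℝ) * q * s * r * B^4 + (2 : ℝ) * q * s * r * A^2 + (2 : ℝ) * q * s * r * A^4) * hs + ((-2 : ℝ) * k2^3 * B^2 + (2 : ℝ) * k2^3 * B^4 + (-2 : ℝ) * k2^3 * A^2 + (-2 : ℝ) * k2^3 * A^4 + (4 : ℝ) * k1 * k2 * B^2 + (-4 : ℝ) * k1 * k2 * B^4 + (4 : ℝ) * k1 * k2 * A^2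 + (4 : ℝ) * k1 * k2 * A^4 + (2 : ℝ) * q * r * k2^2 * B^2 + (-2 : ℝ) * q * r * k2^2 * B^4 + (-2 : ℝ) * q * r * k2^2 * A^2 + (-2 : ℝ) * q * r * k2^2 * A^4 + (-4 : ℝ) * q * r * k1 * B^2 + (4 : ℝ) * q * r * k1 * B^4 + (4 : ℝ) * q * r * k1 * A^2 + (4 : ℝ) * q * r * k1 * A^4) * hqr + ((2 : ℝ) * r^2 * k2^2 * B^2 + (-2 : ℝ) * r^2 * k2^2 * B^4 + (-2 : ℝ) * r^2 * k2^2 * A^2 + (-2 : ℝ) * r^2 * k2^2 * A^4 + (-4 : ℝ) * r^2 * k1 * B^2 + (4 : ℝ) * r^2 * k1 * B^4 + (4 : ℝ) * r^2 * k1 * A^2 + (4 : ℝ) * r^2 * k1 * A^4) * hq + ((4 : ℝ) * k2^2 * B^2 + (-4 : ℝ) * k2^2 * B^4 + (-4 : ℝ) * k2^2 * A^2 + (-4 : ℝ) * k2^2 * A^4 + (-8 : ℝ) * k1 * B^2 + (8 : ℝ) * k1 * B^4 + (8 : ℝ) * k1 * A^2 + (8 : ℝ) * k1 * A^4) * hr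


section Aux
variable {k₁ k₂ : ℝ} (hk₁ : 0 ≤ k₁) (hk₂ : 0 ≤ k₂) (hk : k₂ ^ 2 < 2 * k₁)


lemma hd1 (k₁ k₂ t : ℝ) :
    HasDerivAt (fun τ : ℝ => mu1 k₁ k₂ / Real.sqrt 2 * τ) (mu1 k₁ k₂ / Real.sqrt 2) t := by
  simpa using (hasDerivAt_id t).const_mul (mu1 k₁ k₂ / Real.sqrt 2)

lemma hd2 (k₁ k₂ t : ℝ) :
    HasDerivAt (fun τ : ℝ => mu2 k₁ k₂ / Real.sqrt 2 * τ) (mu2 k₁ k₂ / Real.sqrt 2) t := by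
  simpa using (hasDerivAt_id t).const_mul (mu2 k₁ k₂ / Real.sqrt 2)

lemma hasDerivAt_s0C (k₁ k₂ t : ℝ) : HasDerivAt (s0C k₁ k₂) (d0C k₁ k₂ t) t := by
  have := (((hd1 k₁ k₂ t).sinh.pow 2).const_mul ((mu2 k₁ k₂) ^ 2)).sub
    (((hd2 k₁ k₂ t).sin.pow 2).const_mul ((mu1 k₁ k₂) ^ 2))
  refine this.congr_deriv ?_
  simp only [d0C]; ring

lemma hasDerivAt_s1C (k₁ k₂ t : ℝ) : HasDerivAt (s1C k₁ k₂) (d1C k₁ k₂ t) t := by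
  have := ((((hd2 k₁ k₂ t).sin.const_mul (mu1 k₁ k₂)).mul (hd2 k₁ k₂ t).cos).add
      (((hd1 k₁ k₂ t).cosh.const_mul (mu2 k₁ k₂)).mul (hd1 k₁ k₂ t).sinh)).const_mul
      (2 * Real.sqrt k₁ * mu1 k₁ k₂ * mu2 k₁ k₂)
  refine this.congr_deriv ?_
  simp only [d1C]; ring

lemma hasDerivAt_s2C (k₁ k₂ t : ℝ) : HasDerivAt (s2C k₁ k₂) (d2C k₁ k₂ t) t := by
  have := ((((hd2 k₁ k₂ t).sin.pow 2).const_mul ((mu1 k₁ k₂) ^ 2)).add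
      (((hd1 k₁ k₂ t).sinh.pow 2).const_mul ((mu2 k₁ k₂) ^ 2))).const_mul (Real.sqrt (2 * k₁))
  refine this.congr_deriv ?_
  simp only [d2C]; ring

lemma hasDerivAt_d0C (k₁ k₂ t : ℝ) : HasDerivAt (d0C k₁ k₂) (dd0C k₁ k₂ t) t := by
  have := ((((hd1 k₁ k₂ t).sinh.mul (hd1 k₁ k₂ t).cosh).const_mul
        ((mu2 k₁ k₂) ^ 2 * (2 * (mu1 k₁ k₂ / Real.sqrt 2)))).sub
      (((hd2 k₁ k₂ t).sin.mul (hd2 k₁ k₂ t).cos).const_mul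
        ((mu1 k₁ k₂) ^ 2 * (2 * (mu2 k₁ k₂ / Real.sqrt 2)))))
  convert this using 1
  · rfl
  · rfl
  · ext τ; simp only [d0C, Pi.sub_apply, Pi.mul_apply]; ring
  · simp only [dd0C]; ring

lemma deriv_s0C (k₁ k₂ : ℝ) : deriv (s0C k₁ k₂) = d0C k₁ k₂ :=
  funext fun t => (hasDerivAt_s0C k₁ k₂ t).deriv

lemma sqrt2_sq : Real.sqrt 2 ^ 2 = 2 := Real.sq_sqrt (by norm_num)

lemma sqrt2_ne : Real.sqrt 2 ≠ 0 := by positivity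

lemma mu1_eq (k₁ k₂ : ℝ) : mu1 k₁ k₂ = Real.sqrt 2 * (mu1 k₁ k₂ / Real.sqrt 2) := by
  field_simp

lemma mu2_eq (k₁ k₂ : ℝ) : mu2 k₁ k₂ = Real.sqrt 2 * (mu2 k₁ k₂ / Real.sqrt 2) := by
  field_simp

include hk₁ hk₂ hk

lemma sqrtk₁_sq : Real.sqrt k₁ ^ 2 = k₁ := Real.sq_sqrt hk₁

lemma sqrt2k₁_pos : 0 < Real.sqrt (2 * k₁) :=
  Real.sqrt_pos.2 (by nlinarith [sq_nonneg k₂])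

lemma k₂_lt_sqrt : k₂ < Real.sqrt (2 * k₁) := by
  have h2 : Real.sqrt (2 * k₁) ^ 2 = 2 * k₁ := Real.sq_sqrt (by nlinarith [sq_nonneg k₂])
  nlinarith [sqrt2k₁_pos hk₁ hk₂ hk, sq_nonneg (Real.sqrt (2 * k₁) - k₂)]

lemma mu1_sq : (mu1 k₁ k₂) ^ 2 = Real.sqrt (2 * k₁) + k₂ :=
  Real.sq_sqrt (by have := sqrt2k₁_pos hk₁ hk₂ hk; linarith)

lemma mu2_sq : (mu2 k₁ k₂) ^ 2 = Real.sqrt (2 * k₁) - k₂ :=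
  Real.sq_sqrt (by have := k₂_lt_sqrt hk₁ hk₂ hk; linarith)

lemma sqrt_two_k₁_eq : Real.sqrt (2 * k₁) = Real.sqrt 2 * Real.sqrt k₁ :=
  Real.sqrt_mul (by norm_num) k₁


lemma sqrt2k₁_sq : Real.sqrt (2 * k₁) ^ 2 = 2 * k₁ :=
  Real.sq_sqrt (by nlinarith [sq_nonneg k₂])

lemma mu1d_sq : 2 * (mu1 k₁ k₂ / Real.sqrt 2) ^ 2 = Real.sqrt (2 * k₁) + k₂ := by
  rw [div_pow, sqrt2_sq, mu1_sq hk₁ hk₂ hk]; ring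

lemma mu2d_sq : 2 * (mu2 k₁ k₂ / Real.sqrt 2) ^ 2 = Real.sqrt (2 * k₁) - k₂ := by
  rw [div_pow, sqrt2_sq, mu2_sq hk₁ hk₂ hk]; ring

-- key identities
lemma idA (t : ℝ) : d2C k₁ k₂ t = s1C k₁ k₂ t := by
  simp only [d2C, s1C]
  exact absA _ _ _ _ _ _ _ _ _ _ _ _ _ (Real.cosh_sq _) (Real.cos_sq' _) (mu1_sq hk₁ hk₂ hk) (mu2_sq hk₁ hk₂ hk)
    (mu1_eq k₁ k₂) (mu2_eq k₁ k₂) (mu1d_sq hk₁ hk₂ hk) (mu2d_sq hk₁ hk₂ hk)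
    (sqrt2k₁_sq hk₁ hk₂ hk) (sqrt_two_k₁_eq hk₁ hk₂ hk) sqrt2_sq (sqrtk₁_sq hk₁ hk₂ hk)

lemma idI1 (t : ℝ) : s1C k₁ k₂ t * d0C k₁ k₂ t - d1C k₁ k₂ t * s0C k₁ k₂ t
    = (s2C k₁ k₂ t) ^ 2 - 2 * k₁ * (s0C k₁ k₂ t) ^ 2 := by
  simp only [s1C, d0C, d1C, s0C, s2C]
  exact absI1 _ _ _ _ _ _ _ _ _ _ _ _ _ (Real.cosh_sq _) (Real.cos_sq' _) (mu1_sq hk₁ hk₂ hk) (mu2_sq hk₁ hk₂ hk)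
    (mu1_eq k₁ k₂) (mu2_eq k₁ k₂) (mu1d_sq hk₁ hk₂ hk) (mu2d_sq hk₁ hk₂ hk)
    (sqrt2k₁_sq hk₁ hk₂ hk) (sqrt_two_k₁_eq hk₁ hk₂ hk) sqrt2_sq (sqrtk₁_sq hk₁ hk₂ hk)

lemma idI3 (t : ℝ) : dd0C k₁ k₂ t = 2 * s2C k₁ k₂ t + 2 * k₂ * s0C k₁ k₂ t := by
  simp only [dd0C, s2C, s0C]
  exact absI3 _ _ _ _ _ _ _ _ _ _ _ _ _ (Real.cosh_sq _) (Real.cos_sq' _) (mu1_sq hk₁ hk₂ hk) (mu2_sq hk₁ hk₂ hk)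
    (mu1_eq k₁ k₂) (mu2_eq k₁ k₂) (mu1d_sq hk₁ hk₂ hk) (mu2d_sq hk₁ hk₂ hk)
    (sqrt2k₁_sq hk₁ hk₂ hk) (sqrt_two_k₁_eq hk₁ hk₂ hk) sqrt2_sq (sqrtk₁_sq hk₁ hk₂ hk)

lemma idI2 (t : ℝ) : s1C k₁ k₂ t * d0C k₁ k₂ t - (s2C k₁ k₂ t) ^ 2
    = Real.sqrt (2 * k₁) * (s0C k₁ k₂ t * wC k₁ k₂ t) := by
  simp only [s1C, d0C, s2C, s0C, wC]
  exact absI2 _ _ _ _ _ _ _ _ _ _ _ _ _ (Real.cosh_sq _) (Real.cos_sq' _) (mu1_sq hk₁ hk₂ hk) (mu2_sq hk₁ hk₂ hk)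
    (mu1_eq k₁ k₂) (mu2_eq k₁ k₂) (mu1d_sq hk₁ hk₂ hk) (mu2d_sq hk₁ hk₂ hk)
    (sqrt2k₁_sq hk₁ hk₂ hk) (sqrt_two_k₁_eq hk₁ hk₂ hk) sqrt2_sq (sqrtk₁_sq hk₁ hk₂ hk)

lemma wC_pos (t : ℝ) : 0 < wC k₁ k₂ t := by
  have h1 : Real.sin (mu2 k₁ k₂ / Real.sqrt 2 * t) ^ 2 ≤ 1 := Real.sin_sq_le_one _
  have h2 : (0:ℝ) ≤ Real.sinh (mu1 k₁ k₂ / Real.sqrt 2 * t) ^ 2 := sq_nonneg _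
  have h3 : (0:ℝ) ≤ k₂ * ((mu1 k₁ k₂) ^ 2 * Real.sin (mu2 k₁ k₂ / Real.sqrt 2 * t) ^ 2
      + (mu2 k₁ k₂) ^ 2 * Real.sinh (mu1 k₁ k₂ / Real.sqrt 2 * t) ^ 2) := by positivity
  simp only [wC]
  nlinarith

lemma mu1_pos : 0 < mu1 k₁ k₂ := Real.sqrt_pos.2
  (by have := sqrt2k₁_pos hk₁ hk₂ hk; linarith)

lemma mu2_pos : 0 < mu2 k₁ k₂ := Real.sqrt_pos.2
  (by have := k₂_lt_sqrt hk₁ hk₂ hk; linarith)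

lemma s0C_pos {t : ℝ} (ht : 0 < t) : 0 < s0C k₁ k₂ t := by
  have ha := mu1_pos hk₁ hk₂ hk
  have hb := mu2_pos hk₁ hk₂ hk
  have h2 : (0:ℝ) < Real.sqrt 2 := by positivity
  have hat : 0 < mu1 k₁ k₂ / Real.sqrt 2 * t := by positivity
  have hbt : 0 < mu2 k₁ k₂ / Real.sqrt 2 * t := by positivity
  have hsin : |Real.sin (mu2 k₁ k₂ / Real.sqrt 2 * t)| ≤ mu2 k₁ k₂ / Real.sqrt 2 * t := by
    simpa [abs_of_pos hbt] using Real.abs_sin_le_abs (x := mu2 k₁ k₂ / Real.sqrt 2 * t)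
  have hsinh : mu1 k₁ k₂ / Real.sqrt 2 * t < Real.sinh (mu1 k₁ k₂ / Real.sqrt 2 * t) :=
    Real.self_lt_sinh_iff.2 hat
  have h3 : Real.sin (mu2 k₁ k₂ / Real.sqrt 2 * t) ^ 2 ≤ (mu2 k₁ k₂ / Real.sqrt 2 * t) ^ 2 := by
    nlinarith [sq_abs (Real.sin (mu2 k₁ k₂ / Real.sqrt 2 * t)),
      abs_nonneg (Real.sin (mu2 k₁ k₂ / Real.sqrt 2 * t))]
  have h4 : (mu1 k₁ k₂ / Real.sqrt 2 * t) ^ 2 < Real.sinh (mu1 k₁ k₂ / Real.sqrt 2 * t) ^ 2 := by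
    nlinarith
  have hkey : mu2 k₁ k₂ ^ 2 * (mu1 k₁ k₂ / Real.sqrt 2 * t) ^ 2
      = mu1 k₁ k₂ ^ 2 * (mu2 k₁ k₂ / Real.sqrt 2 * t) ^ 2 := by ring
  simp only [s0C]
  nlinarith [mul_le_mul_of_nonneg_left h3 (sq_nonneg (mu1 k₁ k₂)),
    mul_lt_mul_of_pos_left h4 (pow_pos hb 2)]

-- scalar derivative lemmas
lemma hdF {t : ℝ} (hs0 : s0C k₁ k₂ t ≠ 0) :
    HasDerivAt (fun τ => 1 / 2 * -(s1C k₁ k₂ τ / s0C k₁ k₂ τ))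
      ((s2C k₁ k₂ t / s0C k₁ k₂ t) ^ 2 / 2 - k₁) t := by
  have h := (((hasDerivAt_s1C k₁ k₂ t).div (hasDerivAt_s0C k₁ k₂ t) hs0).neg).const_mul (1/2 : ℝ)
  refine h.congr_deriv ?_
  have h1 := idI1 hk₁ hk₂ hk t
  field_simp
  linear_combination h1

lemma hdG {t : ℝ} (hs0 : s0C k₁ k₂ t ≠ 0) :
    HasDerivAt (fun τ => 1 / 2 * (s2C k₁ k₂ τ / s0C k₁ k₂ τ))
      (1 / 2 * (s1C k₁ k₂ t / s0C k₁ k₂ t)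
        - 1 / 2 * (s2C k₁ k₂ t * d0C k₁ k₂ t / (s0C k₁ k₂ t) ^ 2)) t := by
  have h := ((hasDerivAt_s2C k₁ k₂ t).div (hasDerivAt_s0C k₁ k₂ t) hs0).const_mul (1/2 : ℝ)
  refine h.congr_deriv ?_
  rw [idA hk₁ hk₂ hk t]
  field_simp

lemma hdH {t : ℝ} (hs0 : s0C k₁ k₂ t ≠ 0) :
    HasDerivAt (fun τ => 1 / 2 * -(d0C k₁ k₂ τ / s0C k₁ k₂ τ))
      (-(s2C k₁ k₂ t / s0C k₁ k₂ t) + (d0C k₁ k₂ t / s0C k₁ k₂ t) ^ 2 / 2 - k₂) t := by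
  have h := (((hasDerivAt_d0C k₁ k₂ t).div (hasDerivAt_s0C k₁ k₂ t) hs0).neg).const_mul (1/2 : ℝ)
  refine h.congr_deriv ?_
  have h1 := idI3 hk₁ hk₂ hk t
  field_simp
  linear_combination (-s0C k₁ k₂ t) * h1

lemma rhs_eq (n : ℕ) (t : ℝ) :
    harnackMatrix n (s0C k₁ k₂) (s1C k₁ k₂) (s2C k₁ k₂) t * Cmat n
      + (Cmat n)ᵀ * harnackMatrix n (s0C k₁ k₂) (s1C k₁ k₂) (s2C k₁ k₂) t
      + harnackMatrix n (s0C k₁ k₂) (s1C k₁ k₂) (s2C k₁ k₂) t * Dmat n *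
          harnackMatrix n (s0C k₁ k₂) (s1C k₁ k₂) (s2C k₁ k₂) t
      - blockDiag n k₁ k₂
    = Matrix.fromBlocks
        (((s2C k₁ k₂ t / s0C k₁ k₂ t) ^ 2 / 2 - k₁) • 1)
        ((1 / 2 * (s1C k₁ k₂ t / s0C k₁ k₂ t)
          - 1 / 2 * (s2C k₁ k₂ t * deriv (s0C k₁ k₂) t / (s0C k₁ k₂ t) ^ 2)) • 1)
        ((1 / 2 * (s1C k₁ k₂ t / s0C k₁ k₂ t)
          - 1 / 2 * (s2C k₁ k₂ t * deriv (s0C k₁ k₂) t / (s0C k₁ k₂ t) ^ 2)) • 1)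
        ((-(s2C k₁ k₂ t / s0C k₁ k₂ t) + (deriv (s0C k₁ k₂) t / s0C k₁ k₂ t) ^ 2 / 2 - k₂) • 1) := by
  simp only [harnackMatrix, Cmat, Dmat, _root_.blockDiag, Matrix.fromBlocks_transpose,
    Matrix.transpose_zero, Matrix.transpose_neg, Matrix.transpose_one,
    Matrix.smul_mul, Matrix.mul_smul, Matrix.fromBlocks_multiply, Matrix.fromBlocks_smul,
    Matrix.mul_zero, Matrix.zero_mul, Matrix.mul_one, Matrix.one_mul, Matrix.mul_neg,
    Matrix.neg_mul, smul_smul, smul_zero, zero_add, add_zero, smul_neg, neg_smul,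
    sub_eq_add_neg, Matrix.fromBlocks_neg, Matrix.fromBlocks_add, neg_zero, neg_neg]
  rw [Matrix.fromBlocks_inj]
  refine ⟨?_, ?_, ?_, ?_⟩ <;> module

lemma ST_eq_one (n : ℕ) {t : ℝ} (hs0 : s0C k₁ k₂ t ≠ 0) :
    harnackMatrix n (s0C k₁ k₂) (s1C k₁ k₂) (s2C k₁ k₂) t * Tmat n k₁ k₂ t = 1 := by
  have hw : wC k₁ k₂ t ≠ 0 := (wC_pos hk₁ hk₂ hk t).ne'
  have hsq : Real.sqrt (2 * k₁) ≠ 0 := (sqrt2k₁_pos hk₁ hk₂ hk).ne'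
  have hI2 := idI2 hk₁ hk₂ hk t
  simp only [harnackMatrix, Tmat, deriv_s0C, Matrix.smul_mul, Matrix.mul_smul,
    Matrix.fromBlocks_multiply, Matrix.fromBlocks_smul,
    Matrix.mul_zero, Matrix.zero_mul, Matrix.mul_one, Matrix.one_mul, Matrix.mul_neg,
    Matrix.neg_mul, smul_smul, smul_zero, zero_add, add_zero, smul_neg, neg_smul, neg_neg]
  have h2 : Real.sqrt 2 ≠ 0 := sqrt2_ne
  have hk1 : Real.sqrt k₁ ≠ 0 := by
    have : 0 < k₁ := by nlinarith [sq_nonneg k₂]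
    exact (Real.sqrt_pos.2 this).ne'
  rw [sqrt_two_k₁_eq hk₁ hk₂ hk] at hI2
  rw [← Matrix.fromBlocks_one, Matrix.fromBlocks_inj]
  rw [sqrt_two_k₁_eq hk₁ hk₂ hk]
  refine ⟨?_, ?_, ?_, ?_⟩
  · match_scalars
    field_simp
    linear_combination hI2
  · match_scalars; ring
  · match_scalars; ring
  · match_scalars
    field_simp
    linear_combination hI2

end Aux

/-- **Explicit solution of the Riccati equation, case `k₂² < 2k₁`** (Lemma 3.3 (3)). -/
theorem riccati_explicit_case3 (n : ℕ) (hn : 1 ≤ n)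
    (k₁ k₂ : ℝ) (hk₁ : 0 ≤ k₁) (hk₂ : 0 ≤ k₂) (hk : k₂ ^ 2 < 2 * k₁) :
    (∀ a b : ℝ, 0 ≤ a → (∀ r ∈ Ioo a b, s0C k₁ k₂ r ≠ 0) → ∀ t ∈ Ioo a b,
      ∀ i j, HasDerivAt (fun τ => harnackMatrix n (s0C k₁ k₂) (s1C k₁ k₂) (s2C k₁ k₂) τ i j)
        ((harnackMatrix n (s0C k₁ k₂) (s1C k₁ k₂) (s2C k₁ k₂) t * Cmat n
          + (Cmat n)ᵀ * harnackMatrix n (s0C k₁ k₂) (s1C k₁ k₂) (s2C k₁ k₂) t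
          + harnackMatrix n (s0C k₁ k₂) (s1C k₁ k₂) (s2C k₁ k₂) t * Dmat n *
              harnackMatrix n (s0C k₁ k₂) (s1C k₁ k₂) (s2C k₁ k₂) t
          - blockDiag n k₁ k₂) i j) t) ∧
    (∀ i j, Tendsto (fun t => (harnackMatrix n (s0C k₁ k₂) (s1C k₁ k₂) (s2C k₁ k₂) t)⁻¹ i j)
      (nhdsWithin 0 (Ioi 0)) (nhds 0)) := by
  constructor
  · intro a b ha hne t ht i j
    have hs0 := hne t ht
    rw [rhs_eq hk₁ hk₂ hk n t, deriv_s0C k₁ k₂]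
    rcases i with i | i <;> rcases j with j | j <;>
      simp only [harnackMatrix, deriv_s0C, Matrix.smul_apply, Matrix.fromBlocks_apply₁₁,
        Matrix.fromBlocks_apply₁₂, Matrix.fromBlocks_apply₂₁, Matrix.fromBlocks_apply₂₂,
        smul_eq_mul, Matrix.one_apply] <;>
      rcases eq_or_ne i j with hij | hij <;>
      simp only [if_pos, if_neg, hij, mul_one, mul_zero, if_true, if_false, ite_true, ite_false]
    · exact hdF hk₁ hk₂ hk hs0
    · exact hasDerivAt_const t 0
    · exact hdG hk₁ hk₂ hk hs0
    · exact hasDerivAt_const t 0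
    · exact hdG hk₁ hk₂ hk hs0
    · exact hasDerivAt_const t 0
    · exact hdH hk₁ hk₂ hk hs0
    · exact hasDerivAt_const t 0
  · intro i j
    have hev : (fun t => Tmat n k₁ k₂ t i j)
        =ᶠ[nhdsWithin 0 (Ioi 0)] (fun t => (harnackMatrix n (s0C k₁ k₂) (s1C k₁ k₂) (s2C k₁ k₂) t)⁻¹ i j) := by
      filter_upwards [self_mem_nhdsWithin] with t ht
      have hs0 : s0C k₁ k₂ t ≠ 0 := (s0C_pos hk₁ hk₂ hk ht).ne'
      rw [Matrix.inv_eq_right_inv (ST_eq_one hk₁ hk₂ hk n hs0)]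
    refine Tendsto.congr' hev ?_
    have hcont : Continuous (fun t => Tmat n k₁ k₂ t i j) := by
      rcases i with i | i <;> rcases j with j | j <;>
        simp only [Tmat, Matrix.smul_apply, Matrix.fromBlocks_apply₁₁,
          Matrix.fromBlocks_apply₁₂, Matrix.fromBlocks_apply₂₁, Matrix.fromBlocks_apply₂₂,
          smul_eq_mul, d0C, s1C, s2C, wC] <;>
      · apply Continuous.mul
        · apply Continuous.div continuous_const
          · fun_prop
          · intro x
            have := wC_pos hk₁ hk₂ hk x
            have := sqrt2k₁_pos hk₁ hk₂ hk
            exact (mul_pos this (by simpa only [wC] using wC_pos hk₁ hk₂ hk x)).ne'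
        · fun_prop
    have h0 : Tmat n k₁ k₂ 0 i j = 0 := by
      rcases i with i | i <;> rcases j with j | j <;>
        simp [Tmat, d0C, s1C, s2C, Matrix.smul_apply]
    have hT : Tendsto (fun t => Tmat n k₁ k₂ t i j) (nhdsWithin 0 (Ioi 0))
        (nhds (Tmat n k₁ k₂ 0 i j)) := (hcont.tendsto 0).mono_left nhdsWithin_le_nhds
    rwa [h0] at hT
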